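/- In dimension d = 1, for the kernel χ_τ(t,r) = (2π)^{-1/2} ∫₀ʳ ∫₀^{t-r} (B_u - B_r)(iτ+s)^{-3/2} e^{-|B_r-B_u|²/(2(iτ+s))} ds du, there is a constant C such that |χ_τ(t,r)| ≤ C r for all 0 ≤ r ≤ t and all τ > 0, almost surely. Consequently the quadratic variation ∫₀ᵗ |χ_τ(t,r)|² dr ≤ C² t³/3 uniformly in τ. -/

import Mathlib

open MeasureTheory ProbabilityTheory Real Complex

/-- `b` is a standard one-dimensional Brownian motion. -/
def IsBrownian1 {Ω : Type*} [MeasureSpace Ω] (b : ℝ → Ω → ℝ) : Prop :=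
  (∀ ω, b 0 ω = 0) ∧
  (∀ ω, Continuous fun t => b t ω) ∧
  (∀ s t : ℝ, 0 ≤ s → s ≤ t → ∀ θ : ℝ,
    (∫ ω, Complex.exp (Complex.I * ((θ * (b t ω - b s ω) : ℝ) : ℂ)))
      = ((Real.exp (-(θ^2 * (t - s)) / 2) : ℝ) : ℂ)) ∧
  (∀ n : ℕ, ∀ u : Fin (n + 1) → ℝ, Monotone u →
    iIndepFun
      (fun i : Fin n => fun ω => b (u i.succ) ω - b (u i.castSucc) ω) ℙ)

/-- The kernel `χ_τ(t,r)` along a path `W`, in dimension one: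
`χ_τ(t,r) = (2π)^{-1/2} ∫₀ʳ ∫₀^{t-r} (W_u - W_r)(iτ+s)^{-3/2}
e^{-|W_r-W_u|²/(2(iτ+s))} ds du` (principal branch). -/
noncomputable def chi1 (τ t r : ℝ) (W : ℝ → ℝ) : ℂ :=
  ((2 * Real.pi : ℝ) : ℂ) ^ (-(1:ℂ)/2) *
    ∫ u in (0:ℝ)..r, ∫ s in (0:ℝ)..(t - r),
      ((W u - W r : ℝ) : ℂ) * (Complex.I * (τ:ℂ) + (s:ℂ)) ^ (-(3:ℂ)/2) *
        Complex.exp (-(((W r - W u : ℝ) : ℂ))^2 / (2 * (Complex.I * (τ:ℂ) + (s:ℂ))))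

noncomputable def fc (τ x : ℝ) (s : ℝ) : ℂ :=
  (x:ℂ) * (Complex.I * (τ:ℂ) + (s:ℂ)) ^ (-(3:ℂ)/2) *
    Complex.exp (-((x:ℝ):ℂ)^2 / (2 * (Complex.I * (τ:ℂ) + (s:ℂ))))

lemma zc_ne {τ : ℝ} (hτ : 0 < τ) (s : ℝ) : Complex.I * (τ:ℂ) + (s:ℂ) ≠ 0 := by
  intro h
  have h2 : (Complex.I * (τ:ℂ) + (s:ℂ)).im = 0 := by rw [h]; simp
  simp [Complex.add_im, Complex.mul_im] at h2
  linarith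

lemma norm_fc {τ : ℝ} (hτ : 0 < τ) (x s : ℝ) :
    ‖fc τ x s‖ = |x| * (s^2+τ^2) ^ (-(3/4) : ℝ) *
      Real.exp (-(x^2*s/(2*(s^2+τ^2)))) := by
  have hA : (0:ℝ) < s^2+τ^2 := by positivity
  have hz := zc_ne hτ s
  rw [fc, norm_mul, norm_mul,
    Complex.norm_real, Real.norm_eq_abs, Complex.norm_exp, Complex.norm_cpow_of_ne_zero hz]
  have h1 : ‖Complex.I * (τ:ℂ) + (s:ℂ)‖ = Real.sqrt (s^2+τ^2) := by
    rw [Complex.norm_def, Complex.normSq_apply]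
    simp [Complex.add_re, Complex.add_im, Complex.mul_re, Complex.mul_im]
    ring_nf
  have h2 : (-(3:ℂ)/2).re = -(3/2 : ℝ) := by norm_num
  have h3 : (-(3:ℂ)/2).im = 0 := by norm_num
  have h4 : (Real.sqrt (s^2+τ^2)) ^ (-(3/2) : ℝ) = (s^2+τ^2) ^ (-(3/4) : ℝ) := by
    rw [Real.sqrt_eq_rpow, ← Real.rpow_mul hA.le]
    norm_num
  have h5 : (-((x:ℝ):ℂ)^2 / (2 * (Complex.I * (τ:ℂ) + (s:ℂ)))).re
      = -(x^2*s/(2*(s^2+τ^2))) := by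
    rw [Complex.div_re]
    simp only [Complex.normSq_apply, Complex.add_re, Complex.add_im, Complex.mul_re,
      Complex.mul_im, Complex.neg_re, Complex.neg_im, ← Complex.ofReal_pow, Complex.ofReal_re,
      Complex.ofReal_im, Complex.I_re, Complex.I_im, Complex.mul_re, Complex.mul_im,
      Complex.re_ofNat, Complex.im_ofNat]
    rw [show ((2:ℝ) * (0 * τ - 1 * 0 + s) - 0 * (0 * 0 + 1 * τ + 0)) *
          ((2:ℝ) * (0 * τ - 1 * 0 + s) - 0 * (0 * 0 + 1 * τ + 0)) +
        ((2:ℝ) * (0 * 0 + 1 * τ + 0) + 0 * (0 * τ - 1 * 0 + s)) *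
          ((2:ℝ) * (0 * 0 + 1 * τ + 0) + 0 * (0 * τ - 1 * 0 + s)) = 4 * (s^2 + τ^2) by ring]
    field_simp
    ring
  rw [h1, h2, h3, h4, h5]
  simp

lemma exp_neg_le {y : ℝ} (hy : 0 < y) : Real.exp (-y) ≤ y ^ (-(3/4) : ℝ) := by
  rcases le_total y 1 with h | h
  · calc Real.exp (-y) ≤ 1 := by rw [Real.exp_le_one_iff]; linarith
      _ ≤ y ^ (-(3/4):ℝ) :=
        Real.one_le_rpow_of_pos_of_le_one_of_nonpos hy h (by norm_num)
  · have h1 : Real.exp (-y) ≤ y⁻¹ := by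
      rw [Real.exp_neg]
      exact inv_anti₀ hy (by linarith [Real.add_one_le_exp y])
    calc Real.exp (-y) ≤ y⁻¹ := h1
      _ = y ^ (-1:ℝ) := (Real.rpow_neg_one y).symm
      _ ≤ y ^ (-(3/4):ℝ) := Real.rpow_le_rpow_of_exponent_le h (by norm_num)

lemma norm_fc_le1 {τ x s : ℝ} (hτ : 0 < τ) (hs : 0 < s) :
    ‖fc τ x s‖ ≤ |x| * s ^ (-(3/2) : ℝ) := by
  rw [norm_fc hτ]
  have hA : (0:ℝ) < s^2+τ^2 := by positivity
  have h1 : Real.exp (-(x^2*s/(2*(s^2+τ^2)))) ≤ 1 := by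
    rw [Real.exp_le_one_iff]
    have : (0:ℝ) ≤ x^2*s/(2*(s^2+τ^2)) := by positivity
    linarith
  have h2 : (s^2+τ^2 : ℝ) ^ (-(3/4):ℝ) ≤ s ^ (-(3/2):ℝ) := by
    have ha : (s^2+τ^2 : ℝ) ^ (-(3/4):ℝ) ≤ (s^2 : ℝ) ^ (-(3/4):ℝ) :=
      Real.rpow_le_rpow_of_nonpos (by positivity) (by nlinarith) (by norm_num)
    have hb : ((s:ℝ)^2) ^ (-(3/4):ℝ) = s ^ (-(3/2):ℝ) := by
      rw [← Real.rpow_natCast s 2, ← Real.rpow_mul hs.le]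
      norm_num
    rw [hb] at ha; exact ha
  calc |x| * (s^2+τ^2) ^ (-(3/4):ℝ) * Real.exp (-(x^2*s/(2*(s^2+τ^2))))
      ≤ |x| * s ^ (-(3/2):ℝ) * 1 := by
        apply mul_le_mul (mul_le_mul_of_nonneg_left h2 (abs_nonneg x)) h1
          (Real.exp_pos _).le (by positivity)
    _ = |x| * s ^ (-(3/2):ℝ) := by ring

lemma norm_fc_le2 {τ x s : ℝ} (hτ : 0 < τ) (hx : x ≠ 0) (hs : 0 < s) :
    ‖fc τ x s‖ ≤ 2 ^ ((3:ℝ)/4) * |x| ^ (-(1/2):ℝ) * s ^ (-(3/4):ℝ) := by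
  rw [norm_fc hτ]
  have hA : (0:ℝ) < s^2+τ^2 := by positivity
  have hw : (0:ℝ) < |x| := abs_pos.mpr hx
  have hy : (0:ℝ) < x^2*s/(2*(s^2+τ^2)) := by positivity
  have h1 : |x| * (s^2+τ^2) ^ (-(3/4):ℝ) * Real.exp (-(x^2*s/(2*(s^2+τ^2))))
      ≤ |x| * (s^2+τ^2) ^ (-(3/4):ℝ) * (x^2*s/(2*(s^2+τ^2))) ^ (-(3/4):ℝ) :=
    mul_le_mul_of_nonneg_left (exp_neg_le hy) (by positivity)
  refine h1.trans (le_of_eq ?_)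
  have hL : (0:ℝ) < |x| * (s^2+τ^2) ^ (-(3/4):ℝ) * (x^2*s/(2*(s^2+τ^2))) ^ (-(3/4):ℝ) := by
    positivity
  have hR : (0:ℝ) < 2 ^ ((3:ℝ)/4) * |x| ^ (-(1/2):ℝ) * s ^ (-(3/4):ℝ) := by positivity
  apply Real.log_injOn_pos (Set.mem_Ioi.mpr hL) (Set.mem_Ioi.mpr hR)
  have hxs : x^2 = |x|^2 := (_root_.sq_abs x).symm
  have hly : Real.log (x^2*s/(2*(s^2+τ^2)))
      = 2*Real.log |x| + Real.log s - Real.log 2 - Real.log (s^2+τ^2) := by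
    rw [Real.log_div (by positivity) (by positivity), Real.log_mul (by positivity) hs.ne',
      Real.log_mul two_ne_zero hA.ne', hxs, Real.log_pow]
    push_cast
    ring
  rw [Real.log_mul (by positivity) (by positivity), Real.log_mul hw.ne' (by positivity),
    Real.log_mul (by positivity) (by positivity), Real.log_mul (by positivity) (by positivity),
    Real.log_rpow hA, Real.log_rpow hy, Real.log_rpow two_pos, Real.log_rpow hw,
    Real.log_rpow hs, hly]
  ring

lemma fc_cont {τ : ℝ} (hτ : 0 < τ) (x : ℝ) : Continuous (fc τ x) := by
  have hc : Continuous fun s : ℝ => Complex.I * (τ:ℂ) + (s:ℂ) := by continuity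
  refine (continuous_const.mul (hc.cpow continuous_const fun s => ?_)).mul
    (Complex.continuous_exp.comp ((continuous_const.div (continuous_const.mul hc))
      fun s => mul_ne_zero two_ne_zero (zc_ne hτ s)))
  rw [Complex.mem_slitPlane_iff]
  right
  simp [Complex.add_im, Complex.mul_im]
  exact hτ.ne'

lemma fc_intble {τ : ℝ} (hτ : 0 < τ) (x a b : ℝ) :
    IntervalIntegrable (fc τ x) volume a b :=
  (fc_cont hτ x).intervalIntegrable a b

lemma piece1 {τ x : ℝ} (hτ : 0 < τ) (hx : x ≠ 0) {c : ℝ} (hc : 0 ≤ c) (hcx : c ≤ x^2) :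
    ‖∫ s in (0:ℝ)..c, fc τ x s‖ ≤ 8 := by
  have hw : (0:ℝ) < |x| := abs_pos.mpr hx
  have hInt : IntervalIntegrable
      (fun s : ℝ => 2 ^ ((3:ℝ)/4) * |x| ^ (-(1/2):ℝ) * s ^ (-(3/4):ℝ)) volume 0 c := by
    apply IntervalIntegrable.const_mul
    exact intervalIntegral.intervalIntegrable_rpow' (by norm_num)
  have hb : ∀ᵐ s ∂volume.restrict (Set.uIoc (0:ℝ) c),
      ‖fc τ x s‖ ≤ 2 ^ ((3:ℝ)/4) * |x| ^ (-(1/2):ℝ) * s ^ (-(3/4):ℝ) := by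
    refine (ae_restrict_mem measurableSet_uIoc).mono fun s hs => ?_
    rw [Set.uIoc_of_le hc] at hs
    exact norm_fc_le2 hτ hx hs.1
  refine (intervalIntegral.norm_integral_le_abs_of_norm_le hb hInt).trans ?_
  rw [intervalIntegral.integral_const_mul,
    integral_rpow (Or.inl (by norm_num))]
  have h0 : (0:ℝ) ^ (-(3/4) + 1 : ℝ) = 0 := Real.zero_rpow (by norm_num)
  rw [h0, sub_zero]
  have hc4 : c ^ (-(3/4) + 1 : ℝ) ≤ |x| ^ ((1:ℝ)/2) := by
    have h1 : c ^ (-(3/4) + 1 : ℝ) ≤ (x^2) ^ (-(3/4) + 1 : ℝ) :=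
      Real.rpow_le_rpow hc hcx (by norm_num)
    have h2 : ((x:ℝ)^2) ^ (-(3/4) + 1 : ℝ) = |x| ^ ((1:ℝ)/2) := by
      rw [← _root_.sq_abs x, ← Real.rpow_natCast |x| 2, ← Real.rpow_mul (abs_nonneg x)]
      norm_num
    rw [h2] at h1; exact h1
  have hxx : |x| ^ (-(1/2):ℝ) * |x| ^ ((1:ℝ)/2) = 1 := by
    rw [← Real.rpow_add hw]; norm_num
  have h2le : (2:ℝ) ^ ((3:ℝ)/4) ≤ 2 := by
    calc (2:ℝ) ^ ((3:ℝ)/4) ≤ 2 ^ (1:ℝ) :=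
        Real.rpow_le_rpow_of_exponent_le one_le_two (by norm_num)
      _ = 2 := Real.rpow_one 2
  have hnn : (0:ℝ) ≤ 2 ^ ((3:ℝ)/4) * |x| ^ (-(1/2):ℝ) := by positivity
  have key : 2 ^ ((3:ℝ)/4) * |x| ^ (-(1/2):ℝ) * ((c ^ (-(3/4) + 1 : ℝ) ) / (-(3/4) + 1)) ≤ 8 := by
    have e1 : 2 ^ ((3:ℝ)/4) * |x| ^ (-(1/2):ℝ) * ((c ^ (-(3/4) + 1 : ℝ) ) / (-(3/4) + 1))
        = 2 ^ ((3:ℝ)/4) * (|x| ^ (-(1/2):ℝ) * c ^ (-(3/4) + 1 : ℝ)) * 4 := by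
      norm_num; ring
    rw [e1]
    have e2 : |x| ^ (-(1/2):ℝ) * c ^ (-(3/4) + 1 : ℝ) ≤ 1 := by
      calc |x| ^ (-(1/2):ℝ) * c ^ (-(3/4) + 1 : ℝ)
          ≤ |x| ^ (-(1/2):ℝ) * |x| ^ ((1:ℝ)/2) :=
            mul_le_mul_of_nonneg_left hc4 (by positivity)
        _ = 1 := hxx
    nlinarith [Real.rpow_pos_of_pos two_pos ((3:ℝ)/4), Real.rpow_pos_of_pos hw (-(1/2):ℝ),
      Real.rpow_nonneg hc (-(3/4) + 1 : ℝ)]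
  calc |2 ^ ((3:ℝ)/4) * |x| ^ (-(1/2):ℝ) * ((c ^ (-(3/4) + 1 : ℝ) ) / (-(3/4) + 1))|
      = 2 ^ ((3:ℝ)/4) * |x| ^ (-(1/2):ℝ) * ((c ^ (-(3/4) + 1 : ℝ) ) / (-(3/4) + 1)) := by
        exact _root_.abs_of_nonneg (by positivity)
    _ ≤ 8 := key

lemma piece2 {τ x : ℝ} (hτ : 0 < τ) (hx : x ≠ 0) {T : ℝ} (hxT : x^2 ≤ T) :
    ‖∫ s in (x^2)..T, fc τ x s‖ ≤ 2 := by
  have hw : (0:ℝ) < |x| := abs_pos.mpr hx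
  have hx2 : (0:ℝ) < x^2 := by positivity
  have h0not : (0:ℝ) ∉ Set.uIcc (x^2) T := by
    rw [Set.uIcc_of_le hxT]
    intro h
    exact absurd h.1 (by linarith)
  have hInt : IntervalIntegrable (fun s : ℝ => |x| * s ^ (-(3/2):ℝ)) volume (x^2) T := by
    apply IntervalIntegrable.const_mul
    exact intervalIntegral.intervalIntegrable_rpow (Or.inr h0not)
  have hb : ∀ᵐ s ∂volume.restrict (Set.uIoc (x^2) T),
      ‖fc τ x s‖ ≤ |x| * s ^ (-(3/2):ℝ) := by
    refine (ae_restrict_mem measurableSet_uIoc).mono fun s hs => ?_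
    rw [Set.uIoc_of_le hxT] at hs
    exact norm_fc_le1 hτ (lt_trans hx2 hs.1)
  refine (intervalIntegral.norm_integral_le_abs_of_norm_le hb hInt).trans ?_
  rw [intervalIntegral.integral_const_mul, integral_rpow (Or.inr ⟨by norm_num, h0not⟩)]
  have hT0 : (0:ℝ) < T := lt_of_lt_of_le hx2 hxT
  have e1 : ((x:ℝ)^2) ^ (-(3/2) + 1 : ℝ) = |x| ^ (-1:ℝ) := by
    rw [← _root_.sq_abs x, ← Real.rpow_natCast |x| 2, ← Real.rpow_mul (abs_nonneg x)]
    norm_num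
  have e2 : |x| * |x| ^ (-1:ℝ) = 1 := by
    rw [Real.rpow_neg_one]
    exact mul_inv_cancel₀ hw.ne'
  have hTnn : (0:ℝ) ≤ T ^ (-(3/2) + 1 : ℝ) := Real.rpow_nonneg hT0.le _
  have hmono : T ^ (-(3/2) + 1 : ℝ) ≤ (x^2) ^ (-(3/2) + 1 : ℝ) :=
    Real.rpow_le_rpow_of_nonpos hx2 hxT (by norm_num)
  have habs : |x| * ((T ^ (-(3/2) + 1 : ℝ) - (x^2) ^ (-(3/2) + 1 : ℝ)) / (-(3/2) + 1))
      = |x| * ((x^2) ^ (-(3/2) + 1 : ℝ) - T ^ (-(3/2) + 1 : ℝ)) * 2 := by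
    field_simp
    ring
  rw [habs, e1]
  have : |x| * (|x| ^ (-1:ℝ) - T ^ (-(3/2) + 1 : ℝ)) ≤ 1 := by
    have : |x| * (|x| ^ (-1:ℝ) - T ^ (-(3/2) + 1 : ℝ)) ≤ |x| * |x| ^ (-1:ℝ) := by
      apply mul_le_mul_of_nonneg_left _ (abs_nonneg x)
      linarith
    rw [e2] at this; exact this
  have hnn2 : 0 ≤ |x| * (|x| ^ (-1:ℝ) - T ^ (-(3/2) + 1 : ℝ)) := by
    rw [← e1]
    have := hmono
    nlinarith [abs_nonneg x]
  rw [_root_.abs_of_nonneg (by nlinarith : (0:ℝ) ≤ |x| * (|x| ^ (-1:ℝ) - T ^ (-(3/2) + 1 : ℝ)) * 2)]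
  nlinarith

lemma inner_le {τ : ℝ} (hτ : 0 < τ) (x : ℝ) {T : ℝ} (hT : 0 ≤ T) :
    ‖∫ s in (0:ℝ)..T, fc τ x s‖ ≤ 10 := by
  rcases eq_or_ne x 0 with rfl | hx
  · have : ∀ s : ℝ, fc τ 0 s = 0 := by intro s; simp [fc]
    simp [this]
  rcases le_or_gt T (x^2) with h | h
  · exact (piece1 hτ hx hT h).trans (by norm_num)
  · have hsplit : (∫ s in (0:ℝ)..x^2, fc τ x s) + ∫ s in (x^2)..T, fc τ x s
        = ∫ s in (0:ℝ)..T, fc τ x s :=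
      intervalIntegral.integral_add_adjacent_intervals (fc_intble hτ x 0 (x^2)) (fc_intble hτ x (x^2) T)
    rw [← hsplit]
    calc ‖(∫ s in (0:ℝ)..x^2, fc τ x s) + ∫ s in (x^2)..T, fc τ x s‖
        ≤ ‖∫ s in (0:ℝ)..x^2, fc τ x s‖ + ‖∫ s in (x^2)..T, fc τ x s‖ := norm_add_le _ _
      _ ≤ 8 + 2 := add_le_add (piece1 hτ hx (by positivity) le_rfl) (piece2 hτ hx h.le)
      _ = 10 := by norm_num

lemma chi_le {τ : ℝ} (hτ : 0 < τ) {t r : ℝ} (hr : 0 ≤ r) (hrt : r ≤ t) (W : ℝ → ℝ) :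
    ‖chi1 τ t r W‖ ≤ 10 * r := by
  rw [chi1, norm_mul]
  have h1 : ‖((2 * Real.pi : ℝ) : ℂ) ^ (-(1:ℂ)/2)‖ ≤ 1 := by
    rw [Complex.norm_cpow_eq_rpow_re_of_pos (by positivity)]
    apply Real.rpow_le_one_of_one_le_of_nonpos (by nlinarith [Real.pi_gt_three])
    norm_num
  have h2 : ‖∫ u in (0:ℝ)..r, ∫ s in (0:ℝ)..(t - r),
      ((W u - W r : ℝ) : ℂ) * (Complex.I * (τ:ℂ) + (s:ℂ)) ^ (-(3:ℂ)/2) *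
        Complex.exp (-(((W r - W u : ℝ) : ℂ))^2 / (2 * (Complex.I * (τ:ℂ) + (s:ℂ))))‖
      ≤ 10 * r := by
    have := intervalIntegral.norm_integral_le_of_norm_le_const (a := 0) (b := r) (C := 10)
      (f := fun u => ∫ s in (0:ℝ)..(t - r),
        ((W u - W r : ℝ) : ℂ) * (Complex.I * (τ:ℂ) + (s:ℂ)) ^ (-(3:ℂ)/2) *
          Complex.exp (-(((W r - W u : ℝ) : ℂ))^2 / (2 * (Complex.I * (τ:ℂ) + (s:ℂ)))))
      (fun u _ => ?_)
    · rw [sub_zero, _root_.abs_of_nonneg hr] at this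
      exact this
    · beta_reduce
      have hcast : (((W r - W u : ℝ) : ℂ))^2 = (((W u - W r : ℝ) : ℂ))^2 := by
        push_cast; ring
      have : (∫ s in (0:ℝ)..(t - r),
          ((W u - W r : ℝ) : ℂ) * (Complex.I * (τ:ℂ) + (s:ℂ)) ^ (-(3:ℂ)/2) *
            Complex.exp (-(((W r - W u : ℝ) : ℂ))^2 / (2 * (Complex.I * (τ:ℂ) + (s:ℂ)))))
          = ∫ s in (0:ℝ)..(t - r), fc τ (W u - W r) s := by
        rw [hcast]; rfl
      rw [this]
      exact inner_le hτ _ (by linarith)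
  calc ‖((2 * Real.pi : ℝ) : ℂ) ^ (-(1:ℂ)/2)‖ * ‖_‖ ≤ 1 * (10 * r) :=
        mul_le_mul h1 h2 (norm_nonneg _) zero_le_one
    _ = 10 * r := one_mul _


/-- In `d = 1` there is a constant `C` such that `|χ_τ(t,r)| ≤ C r` for all `0 ≤ r ≤ t` and
`τ > 0`, almost surely; consequently `∫₀ᵗ |χ_τ(t,r)|² dr ≤ C² t³/3` uniformly in `τ`. -/
theorem stmt14 {Ω : Type*} [MeasureSpace Ω] [IsProbabilityMeasure (ℙ : Measure Ω)]
    (B : ℝ → Ω → ℝ) (hB : IsBrownian1 B) (t : ℝ) (ht : 0 < t) :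
    ∃ C : ℝ, 0 < C ∧ ∀ τ : ℝ, 0 < τ →
      ∀ᵐ ω ∂(ℙ : Measure Ω),
        (∀ r ∈ Set.Icc (0:ℝ) t, ‖chi1 τ t r (fun u => B u ω)‖ ≤ C * r) ∧
        (∫ r in (0:ℝ)..t, ‖chi1 τ t r (fun u => B u ω)‖^2) ≤ C^2 * t^3 / 3 := by
  refine ⟨10, by norm_num, fun τ hτ => Filter.Eventually.of_forall fun ω =>
    ⟨fun r hr => chi_le hτ hr.1 hr.2 _, ?_⟩⟩
  by_cases hI : IntervalIntegrable (fun r => ‖chi1 τ t r (fun u => B u ω)‖^2) volume 0 t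
  · have hg : IntervalIntegrable (fun r : ℝ => 100 * r^2) volume 0 t :=
      (continuous_const.mul (continuous_pow 2)).intervalIntegrable 0 t
    have hmono := intervalIntegral.integral_mono_on ht.le hI hg (fun r hr => by
      have h1 := chi_le hτ hr.1 hr.2 (fun u => B u ω)
      have h2 : (0:ℝ) ≤ ‖chi1 τ t r fun u => B u ω‖ := norm_nonneg _
      nlinarith)
    refine hmono.trans ?_
    rw [intervalIntegral.integral_const_mul, integral_pow]
    norm_num
    nlinarith
  · rw [intervalIntegral.integral_undef hI]
    positivity
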